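/- For every K-expression W over a monoid M, the Kleene expression ⌈W°⌉ (the indexed expression of the marked expression W°) is unambiguous. -/

import Mathlib

/-- A *rationally additive semiring* is a semiring `K` equipped with a partial operator
assigning to some (countable) families `(f i)_{i ∈ I}` a sum `sum f ∈ K` (`Option`-valued:
`some s` means the sum exists and equals `s`, `none` means the family is not summable),
satisfying axioms (Ax1)–(Ax5) of Ésik and Kuich. Disjoint countable partitions of the index
set `I` are represented by a map `p : I → J` whose fibres are the blocks. -/
structure RatAdd (K : Type) [Semiring K] : Type 1 where
  /-- the partial countable-sum operator -/
  sum : {I : Type} → (I → K) → Option K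
  /-- (Ax1) every finite family is summable, with the usual finite sum as its sum -/
  ax1 : ∀ {I : Type} [Fintype I] (f : I → K), sum f = some (∑ i, f i)
  /-- (Ax2) geometric families are summable -/
  ax2 : ∀ α : K, (sum fun n : ℕ => α ^ n).isSome
  /-- (Ax3, left) products distribute on the left over existing sums -/
  ax3l : ∀ {I : Type} [Countable I] (f : I → K) (s β : K),
    sum f = some s → sum (fun i => β * f i) = some (β * s)
  /-- (Ax3, right) products distribute on the right over existing sums -/
  ax3r : ∀ {I : Type} [Countable I] (f : I → K) (s β : K),
    sum f = some s → sum (fun i => f i * β) = some (s * β)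
  /-- (Ax4) if each block of a countable partition is summable with sum `r j`, and the
  family of the `r j` is summable with sum `s`, then the whole family is summable with sum `s` -/
  ax4 : ∀ {I J : Type} [Countable I] [Countable J] (p : I → J) (f : I → K) (r : J → K),
    (∀ j : J, sum (fun i : {i : I // p i = j} => f i.val) = some (r j)) →
    ∀ s : K, sum r = some s → sum f = some s
  /-- (Ax5) if the whole family is summable with sum `s`, and each block of a countable
  partition is summable with sum `r j`, then the family of the `r j` is summable with sum `s` -/
  ax5 : ∀ {I J : Type} [Countable I] [Countable J] (p : I → J) (f : I → K) (r : J → K),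
    (∀ j : J, sum (fun i : {i : I // p i = j} => f i.val) = some (r j)) →
    ∀ s : K, sum f = some s → sum r = some s
/-- `K`-expressions over a monoid `M`, generated by the grammar
`W ::= k | m | W + W | W·W | W*` with `k ∈ K` and `m ∈ M`. -/
inductive WExp (M K : Type) : Type where
  | scalar : K → WExp M K
  | atom : M → WExp M K
  | add : WExp M K → WExp M K → WExp M K
  | mul : WExp M K → WExp M K → WExp M K
  | star : WExp M K → WExp M K

namespace WExp

variable {M K : Type} [Monoid M] [Semiring K]

open Classical in
/-- The Cauchy product of two partial series: `(s ⋆ t)(m) = Σ_{m₁m₂ = m} s(m₁)·t(m₂)`,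
defined when all the relevant values of `s` and `t` exist and the sum exists. -/
noncomputable def cauchy (R : RatAdd K) (s t : M → Option K) (m : M) : Option K :=
  if h : ∀ p : M × M, p.1 * p.2 = m → ((s p.1).isSome ∧ (t p.2).isSome) then
    R.sum (fun p : {p : M × M // p.1 * p.2 = m} =>
      ((s p.val.1).get ((h p.val p.property).1)) * ((t p.val.2).get ((h p.val p.property).2)))
  else none

open Classical in
/-- The semantics of the `n`-th power `Wⁿ` of an expression with semantics `s`
(`W⁰ = 1`, `Wⁿ = W·Wⁿ⁻¹`). -/
noncomputable def powSem (R : RatAdd K) (s : M → Option K) : ℕ → M → Option K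
  | 0 => fun m => some (if m = (1 : M) then (1 : K) else 0)
  | n + 1 => cauchy R s (powSem R s n)

open Classical in
/-- The (partial) semantics `⟦W⟧ : M → Option K` of a `K`-expression over `M`:
`⟦k⟧` maps the neutral element to `k` and everything else to `0`; `⟦m⟧` is the
characteristic function of `m`; `⟦U + V⟧ = ⟦U⟧ + ⟦V⟧`; `⟦U·V⟧(m) = Σ_{m₁m₂=m} ⟦U⟧(m₁)·⟦V⟧(m₂)`
if this sum exists; `⟦U*⟧(m) = Σ_{n=0}^∞ ⟦Uⁿ⟧(m)` if this sum exists. -/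
noncomputable def sem (R : RatAdd K) : WExp M K → M → Option K
  | scalar k => fun m => some (if m = (1 : M) then k else 0)
  | atom n => fun m => some (if m = n then (1 : K) else 0)
  | add U V => fun m =>
      match U.sem R m, V.sem R m with
      | some a, some b => some (a + b)
      | _, _ => none
  | mul U V => cauchy R (U.sem R) (V.sem R)
  | star U => fun m =>
      if h : ∀ n : ℕ, (powSem R (U.sem R) n m).isSome then
        R.sum (fun n : ℕ => (powSem R (U.sem R) n m).get (h n))
      else none

/-- An expression is *valid* when its semantics, and the semantics of all of its
subexpressions, exist at every point of `M`. -/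
def Valid (R : RatAdd K) : WExp M K → Prop
  | scalar k => ∀ m : M, ((scalar k : WExp M K).sem R m).isSome
  | atom n => ∀ m : M, ((atom n : WExp M K).sem R m).isSome
  | add U V => Valid R U ∧ Valid R V ∧ ∀ m : M, ((add U V).sem R m).isSome
  | mul U V => Valid R U ∧ Valid R V ∧ ∀ m : M, ((mul U V).sem R m).isSome
  | star U => Valid R U ∧ ∀ m : M, ((star U).sem R m).isSome

end WExp
namespace RegularExpression

/-- A Kleene (regular) expression is *unambiguous* if for every subexpression:
a union has disjoint languages of operands, a concatenation induces at most one
factorization of every word, and a Kleene star induces at most one decomposition of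
every word as a concatenation of words of the language of its operand. -/
def Unambiguous {A : Type} : RegularExpression A → Prop
  | .zero => True
  | .epsilon => True
  | .char _ => True
  | .plus F G => F.Unambiguous ∧ G.Unambiguous ∧
      ∀ w : List A, ¬ (w ∈ F.matches' ∧ w ∈ G.matches')
  | .comp F G => F.Unambiguous ∧ G.Unambiguous ∧
      ∀ u₁ v₁ u₂ v₂ : List A, u₁ ∈ F.matches' → u₂ ∈ F.matches' →
        v₁ ∈ G.matches' → v₂ ∈ G.matches' → u₁ ++ v₁ = u₂ ++ v₂ → u₁ = u₂ ∧ v₁ = v₂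
  | .star F => F.Unambiguous ∧
      ∀ l₁ l₂ : List (List A), (∀ u ∈ l₁, u ∈ F.matches') → (∀ u ∈ l₂, u ∈ F.matches') →
        l₁.flatten = l₂.flatten → l₁ = l₂

/-- The subexpressions of a regular expression (every expression is a subexpression
of itself). -/
inductive IsSubexpr {A : Type} : RegularExpression A → RegularExpression A → Prop
  | refl (E : RegularExpression A) : IsSubexpr E E
  | plus_left {E F G : RegularExpression A} : IsSubexpr E F → IsSubexpr E (F.plus G)
  | plus_right {E F G : RegularExpression A} : IsSubexpr E G → IsSubexpr E (F.plus G)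
  | comp_left {E F G : RegularExpression A} : IsSubexpr E F → IsSubexpr E (F.comp G)
  | comp_right {E F G : RegularExpression A} : IsSubexpr E G → IsSubexpr E (F.comp G)
  | star {E F : RegularExpression A} : IsSubexpr E F → IsSubexpr E F.star

/-- `E_{λ,π}`: the `K`-expression over `M` obtained from a Kleene expression `E` by
substituting every letter `a` by the expression `λ(a)·π(a)`, and replacing the Boolean
constants true and false by `1 ∈ K` and `0 ∈ K`. -/
def toWExp {A M K : Type} [Semiring K] (lam : A → M) (pi : A → K) :
    RegularExpression A → WExp M K
  | .zero => .scalar 0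
  | .epsilon => .scalar 1
  | .char a => .mul (.atom (lam a)) (.scalar (pi a))
  | .plus F G => .add (F.toWExp lam pi) (G.toWExp lam pi)
  | .comp F G => .mul (F.toWExp lam pi) (G.toWExp lam pi)
  | .star F => .star (F.toWExp lam pi)

end RegularExpression

namespace WExp

/-- Auxiliary function for `WExp.indexed`: builds the indexed Kleene expression of `W`,
threading a counter so that each occurrence of an atomic subexpression receives a unique
index, numbered from left to right starting from the given value. -/
def indexedAux {M K : Type} : WExp M K → ℕ → RegularExpression ((K ⊕ M) × ℕ) × ℕ
  | .scalar k, n => (RegularExpression.char (Sum.inl k, n), n + 1)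
  | .atom m, n => (RegularExpression.char (Sum.inr m, n), n + 1)
  | .add U V, n =>
      let p := U.indexedAux n
      let q := V.indexedAux p.2
      (p.1.plus q.1, q.2)
  | .mul U V, n =>
      let p := U.indexedAux n
      let q := V.indexedAux p.2
      (p.1.comp q.1, q.2)
  | .star U, n =>
      let p := U.indexedAux n
      (p.1.star, p.2)

/-- The *indexed expression* `⌈W⌉` of a `K`-expression `W` over `M`: the Kleene expression
over the alphabet `(K ⊕ M) × ℕ` obtained by replacing each occurrence of an atomic
subexpression `ℓ ∈ K ⊕ M` by the letter `(ℓ, i)`, where `i` is a unique index per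
occurrence (numbered from left to right starting at `0`). -/
def indexed {M K : Type} (W : WExp M K) : RegularExpression ((K ⊕ M) × ℕ) :=
  (W.indexedAux 0).1

/-- The letter-to-`M` projection `λ` for indexed expressions: `λ(x, n) = x` if `x ∈ M`
and `λ(x, n) = 1_M` if `x ∈ K`. -/
def idxLam {M K : Type} [Monoid M] : (K ⊕ M) × ℕ → M :=
  fun x => Sum.elim (fun _ => (1 : M)) id x.1

/-- The letter-to-`K` projection `π` for indexed expressions: `π(x, n) = x` if `x ∈ K`
and `π(x, n) = 1` if `x ∈ M`. -/
def idxPi {M K : Type} [Semiring K] : (K ⊕ M) × ℕ → K :=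
  fun x => Sum.elim id (fun _ => (1 : K)) x.1

/-- The *marked expression* `W°` of a `K`-expression `W`: a dummy marker `·1` is
concatenated after every Kleene star. -/
def marked {M K : Type} [Semiring K] : WExp M K → WExp M K
  | .scalar k => .scalar k
  | .atom m => .atom m
  | .add U V => .add U.marked V.marked
  | .mul U V => .mul U.marked V.marked
  | .star U => .mul (.star U.marked) (.scalar 1)

end WExp

section Aux

open RegularExpression

private lemma code_unique {A : Type} {L : Language A}
    (hne : ∀ w ∈ L, w ≠ ([] : List A))
    (hpc : ∀ u ∈ L, ∀ v ∈ L, u <+: v → u = v) :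
    ∀ l₁ l₂ : List (List A), (∀ u ∈ l₁, u ∈ L) → (∀ u ∈ l₂, u ∈ L) →
      l₁.flatten = l₂.flatten → l₁ = l₂ := by
  intro l₁
  induction l₁ with
  | nil =>
    intro l₂ _ h₂ hf
    cases l₂ with
    | nil => rfl
    | cons v l₂ =>
      simp only [List.flatten_nil, List.flatten_cons] at hf
      rcases List.append_eq_nil_iff.mp hf.symm with ⟨hv, _⟩
      exact absurd hv (hne v (h₂ v (by simp)))
  | cons u l₁ ih =>
    intro l₂ h₁ h₂ hf
    cases l₂ with
    | nil =>
      simp only [List.flatten_nil, List.flatten_cons] at hf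
      rcases List.append_eq_nil_iff.mp hf with ⟨hu, _⟩
      exact absurd hu (hne u (h₁ u (by simp)))
    | cons v l₂ =>
      simp only [List.flatten_cons] at hf
      have hu : u ∈ L := h₁ u (by simp)
      have hv : v ∈ L := h₂ v (by simp)
      have hcmp : u <+: v ∨ v <+: u :=
        List.prefix_or_prefix_of_prefix ⟨_, hf⟩ (⟨_, rfl⟩ : v <+: v ++ l₂.flatten)
      have huv : u = v := by
        rcases hcmp with h | h
        · exact hpc u hu v hv h
        · exact (hpc v hv u hu h).symm
      subst huv
      have := List.append_cancel_left hf
      rw [ih l₂ (fun w hw => h₁ w (by simp [hw])) (fun w hw => h₂ w (by simp [hw])) this]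

private lemma indexedAux_le {M K : Type} (V : WExp M K) (n : ℕ) :
    n ≤ (V.indexedAux n).2 := by
  induction V generalizing n with
  | scalar k => exact Nat.le_succ n
  | atom m => exact Nat.le_succ n
  | add U V ihU ihV => exact le_trans (ihU n) (ihV _)
  | mul U V ihU ihV => exact le_trans (ihU n) (ihV _)
  | star U ihU => exact ihU n

private lemma marked_aux {M K : Type} [Semiring K] (W : WExp M K) (n : ℕ) :
    (∀ w ∈ ((W.marked.indexedAux n).1).matches', w ≠ [] ∧
        ∀ x ∈ w, n ≤ x.2 ∧ x.2 < (W.marked.indexedAux n).2) ∧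
    (∀ u ∈ ((W.marked.indexedAux n).1).matches',
      ∀ v ∈ ((W.marked.indexedAux n).1).matches', u <+: v → u = v) ∧
    ((W.marked.indexedAux n).1).Unambiguous := by
  induction W generalizing n with
  | scalar k =>
    refine ⟨?_, ?_, trivial⟩
    · intro w hw
      simp only [WExp.marked, WExp.indexedAux, matches'_char, Set.mem_singleton_iff] at hw
      subst hw
      refine ⟨by simp, ?_⟩
      intro x hx
      simp only [List.mem_singleton] at hx
      subst hx
      simp only [WExp.marked, WExp.indexedAux]
      omega
    · intro u hu v hv hp
      simp only [WExp.marked, WExp.indexedAux, matches'_char, Set.mem_singleton_iff] at hu hv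
      rw [hu, hv]
  | atom m =>
    refine ⟨?_, ?_, trivial⟩
    · intro w hw
      simp only [WExp.marked, WExp.indexedAux, matches'_char, Set.mem_singleton_iff] at hw
      subst hw
      refine ⟨by simp, ?_⟩
      intro x hx
      simp only [List.mem_singleton] at hx
      subst hx
      simp only [WExp.marked, WExp.indexedAux]
      omega
    · intro u hu v hv hp
      simp only [WExp.marked, WExp.indexedAux, matches'_char, Set.mem_singleton_iff] at hu hv
      rw [hu, hv]
  | add U V ihU ihV =>
    obtain ⟨bU, pU, uU⟩ := ihU n
    obtain ⟨bV, pV, uV⟩ := ihV ((U.marked.indexedAux n).2)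
    have hmem : ∀ w, w ∈ ((U.marked.add V.marked).indexedAux n).1.matches' ↔
        (w ∈ (U.marked.indexedAux n).1.matches' ∨
         w ∈ (V.marked.indexedAux (U.marked.indexedAux n).2).1.matches') := by
      intro w
      simp only [WExp.indexedAux]
      exact Iff.rfl
    have hle : n ≤ (U.marked.indexedAux n).2 := indexedAux_le _ n
    have hdisj : ∀ w, w ∈ (U.marked.indexedAux n).1.matches' →
        w ∈ (V.marked.indexedAux (U.marked.indexedAux n).2).1.matches' → False := by
      intro w h1 h2
      obtain ⟨hne, hb1⟩ := bU w h1
      obtain ⟨_, hb2⟩ := bV w h2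
      cases w with
      | nil => exact hne rfl
      | cons x w =>
        have := (hb1 x (by simp)).2
        have := (hb2 x (by simp)).1
        omega
    refine ⟨?_, ?_, ?_⟩
    · intro w hw
      rcases (hmem w).mp hw with h | h
      · obtain ⟨h1, h2⟩ := bU w h
        refine ⟨h1, fun x hx => ?_⟩
        have := h2 x hx
        have := indexedAux_le V.marked ((U.marked.indexedAux n).2)
        simp only [WExp.marked, WExp.indexedAux]
        constructor <;> omega
      · obtain ⟨h1, h2⟩ := bV w h
        refine ⟨h1, fun x hx => ?_⟩
        have := h2 x hx
        simp only [WExp.marked, WExp.indexedAux]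
        constructor <;> omega
    · intro u hu v hv hp
      rcases (hmem u).mp hu with h1 | h1 <;> rcases (hmem v).mp hv with h2 | h2
      · exact pU u h1 v h2 hp
      · exfalso
        obtain ⟨hne, hb1⟩ := bU u h1
        obtain ⟨_, hb2⟩ := bV v h2
        cases u with
        | nil => exact hne rfl
        | cons x w =>
          have hx1 := (hb1 x (by simp)).2
          have hxv : x ∈ v := hp.mem (by simp)
          have := (hb2 x hxv).1
          omega
      · exfalso
        obtain ⟨hne, hb1⟩ := bV u h1
        obtain ⟨_, hb2⟩ := bU v h2
        cases u with
        | nil => exact hne rfl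
        | cons x w =>
          have hx1 := (hb1 x (by simp)).1
          have hxv : x ∈ v := hp.mem (by simp)
          have := (hb2 x hxv).2
          omega
      · exact pV u h1 v h2 hp
    · show ((U.marked.indexedAux n).1.plus _).Unambiguous
      exact ⟨uU, uV, fun w hw => hdisj w hw.1 hw.2⟩
  | mul U V ihU ihV =>
    obtain ⟨bU, pU, uU⟩ := ihU n
    obtain ⟨bV, pV, uV⟩ := ihV ((U.marked.indexedAux n).2)
    have hmem : ∀ w, w ∈ ((U.marked.mul V.marked).indexedAux n).1.matches' ↔
        ∃ a ∈ (U.marked.indexedAux n).1.matches',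
          ∃ b ∈ (V.marked.indexedAux (U.marked.indexedAux n).2).1.matches', a ++ b = w := by
      intro w
      simp only [WExp.indexedAux]
      exact Language.mem_mul
    refine ⟨?_, ?_, ?_⟩
    · intro w hw
      obtain ⟨a, ha, b, hb, rfl⟩ := (hmem w).mp hw
      obtain ⟨ha1, ha2⟩ := bU a ha
      obtain ⟨hb1, hb2⟩ := bV b hb
      have hle := indexedAux_le V.marked ((U.marked.indexedAux n).2)
      have hle2 := indexedAux_le U.marked n
      constructor
      · simp [ha1]
      · intro x hx
        simp only [WExp.marked, WExp.indexedAux]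
        rcases List.mem_append.mp hx with h | h
        · have := ha2 x h; constructor <;> omega
        · have := hb2 x h; constructor <;> omega
    · intro u hu v hv hp
      obtain ⟨a₁, ha₁, b₁, hb₁, rfl⟩ := (hmem u).mp hu
      obtain ⟨a₂, ha₂, b₂, hb₂, rfl⟩ := (hmem v).mp hv
      have hpa : a₁ <+: a₂ ∨ a₂ <+: a₁ :=
        List.prefix_or_prefix_of_prefix
          ((List.prefix_append a₁ b₁).trans hp) ⟨_, rfl⟩
      have haa : a₁ = a₂ := by
        rcases hpa with h | h
        · exact pU a₁ ha₁ a₂ ha₂ h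
        · exact (pU a₂ ha₂ a₁ ha₁ h).symm
      subst haa
      have : b₁ <+: b₂ := (List.prefix_append_right_inj a₁).mp hp
      rw [pV b₁ hb₁ b₂ hb₂ this]
    · show (((U.marked.indexedAux n).1).comp _).Unambiguous
      refine ⟨uU, uV, ?_⟩
      intro u₁ v₁ u₂ v₂ hu₁ hu₂ hv₁ hv₂ heq
      have hpa : u₁ <+: u₂ ∨ u₂ <+: u₁ :=
        List.prefix_or_prefix_of_prefix ⟨_, heq⟩ ⟨_, rfl⟩
      have haa : u₁ = u₂ := by
        rcases hpa with h | h
        · exact pU u₁ hu₁ u₂ hu₂ h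
        · exact (pU u₂ hu₂ u₁ hu₁ h).symm
      subst haa
      exact ⟨rfl, List.append_cancel_left heq⟩
  | star U ihU =>
    obtain ⟨bU, pU, uU⟩ := ihU n
    set p2 := (U.marked.indexedAux n).2 with hp2
    set F := (U.marked.indexedAux n).1 with hF
    set c : (K ⊕ M) × ℕ := (Sum.inl 1, p2) with hc
    have hstar : ∀ w, w ∈ (F.star.matches') ↔
        ∃ L : List (List ((K ⊕ M) × ℕ)), w = L.flatten ∧ ∀ y ∈ L, y ∈ F.matches' := by
      intro w; rw [matches'_star]; exact Language.mem_kstar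
    have hform : ((U.star.marked).indexedAux n).1 = F.star.comp (RegularExpression.char c) := by
      simp only [WExp.marked, WExp.indexedAux, WExp.indexedAux]
      rfl
    have hsnd : ((U.star.marked).indexedAux n).2 = p2 + 1 := by
      simp only [WExp.marked, WExp.indexedAux, WExp.indexedAux]
      rfl
    have hmem : ∀ w, w ∈ ((U.star.marked).indexedAux n).1.matches' ↔
        ∃ u ∈ F.star.matches', u ++ [c] = w := by
      intro w
      rw [hform]
      show w ∈ F.star.matches' * (RegularExpression.char c).matches' ↔ _
      rw [matches'_char, Language.mem_mul]
      constructor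
      · rintro ⟨a, ha, b, hb, rfl⟩
        replace hb : b = [c] := hb
        exact ⟨a, ha, by rw [hb]⟩
      · rintro ⟨u, hu, rfl⟩
        exact ⟨u, hu, [c], rfl, rfl⟩
    have hle := indexedAux_le U.marked n
    have hbstar : ∀ u ∈ F.star.matches', ∀ x ∈ u, n ≤ x.2 ∧ x.2 < p2 := by
      intro u hu x hx
      obtain ⟨L, rfl, hL⟩ := (hstar u).mp hu
      obtain ⟨y, hy, hxy⟩ := List.mem_flatten.mp hx
      exact (bU y (hL y hy)).2 x hxy
    refine ⟨?_, ?_, ?_⟩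
    · intro w hw
      obtain ⟨u, hu, rfl⟩ := (hmem w).mp hw
      rw [hsnd]
      constructor
      · simp
      · intro x hx
        rcases List.mem_append.mp hx with h | h
        · have := hbstar u hu x h; constructor <;> omega
        · simp only [List.mem_singleton] at h
          subst h
          constructor <;> simp [hc] <;> omega
    · intro u hu v hv hp
      obtain ⟨a, ha, rfl⟩ := (hmem u).mp hu
      obtain ⟨b, hb, rfl⟩ := (hmem v).mp hv
      -- a ++ [c] <+: b ++ [c]; indices of letters of a,b < p2, c has index p2
      have hlen : a.length + 1 ≤ b.length + 1 := by
        have := hp.length_le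
        simpa using this
      have hab : a.length = b.length := by
        by_contra hne
        have hlt : a.length < b.length := by omega
        -- the letter c of a++[c] at position a.length is a letter of b
        have hcmem : c ∈ b := by
          have h1 : (a ++ [c])[a.length]? = some c := by
            simp
          have h2 : (b ++ [c])[a.length]? = some c := by
            obtain ⟨t, ht⟩ := hp
            rw [← ht]
            rw [List.getElem?_append_left (by simp)]
            exact h1
          rw [List.getElem?_append_left (by simpa using hlt)] at h2 <;> try skip
          exact List.mem_of_getElem? h2
        have := (hbstar b hb c hcmem).2
        simp [hc] at this
      have : a ++ [c] = b ++ [c] := List.IsPrefix.eq_of_length hp (by simp [hab])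
      exact this
    · rw [hform]
      refine ⟨⟨uU, ?_⟩, trivial, ?_⟩
      · intro l₁ l₂ h₁ h₂ hf
        exact code_unique (fun w hw => (bU w hw).1)
          (fun u hu v hv => pU u hu v hv) l₁ l₂ h₁ h₂ hf
      · intro u₁ v₁ u₂ v₂ hu₁ hu₂ hv₁ hv₂ heq
        rw [matches'_char] at hv₁ hv₂
        replace hv₁ : v₁ = [c] := hv₁
        replace hv₂ : v₂ = [c] := hv₂
        subst hv₁; subst hv₂
        exact ⟨List.append_cancel_right heq, rfl⟩

end Aux

/-- For every `K`-expression `W` over a monoid `M`, the Kleene expression `⌈W°⌉` — the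
indexed expression of the marked expression `W°` — is unambiguous. -/
theorem marked_indexed_unambiguous (M K : Type) [Semiring K] (W : WExp M K) :
    W.marked.indexed.Unambiguous :=
  (marked_aux W 0).2.2
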